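/- For any positive real t, any positive integer n, positive reals τ_1 ≤ τ_2 ≤ ... ≤ τ_n, and any index j* in {1,...,n}, if t = 2 (∑_{i=1}^{j*} 1/τ_i)^{-1} (R + j*) for a positive integer R, then ∑_{i=1}^{n} max(⌊t/τ_i⌋ - 1, 0) ≥ R. -/

import Mathlib

theorem stmt_0 (n : ℕ) (hn : 1 ≤ n) (τ : ℕ → ℝ)
    (hτpos : ∀ i ∈ Finset.Icc 1 n, 0 < τ i)
    (hτmono : ∀ i ∈ Finset.Icc 1 n, ∀ j ∈ Finset.Icc 1 n, i ≤ j → τ i ≤ τ j)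
    (R : ℕ) (hR : 1 ≤ R)
    (jstar : ℕ) (hj : jstar ∈ Finset.Icc 1 n)
    (t : ℝ) (ht : 0 < t)
    (hteq : t = 2 * (∑ i ∈ Finset.Icc 1 jstar, (τ i)⁻¹)⁻¹ * ((R : ℝ) + (jstar : ℝ))) :
    (R : ℤ) ≤ ∑ i ∈ Finset.Icc 1 n, max (⌊t / τ i⌋ - 1) 0 := by
  rw [Finset.mem_Icc] at hj
  have hsub : Finset.Icc 1 jstar ⊆ Finset.Icc 1 n := Finset.Icc_subset_Icc_right hj.2
  have hSpos : 0 < ∑ i ∈ Finset.Icc 1 jstar, (τ i)⁻¹ := by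
    apply Finset.sum_pos
    · intro i hi; exact inv_pos.mpr (hτpos i (hsub hi))
    · exact Finset.nonempty_Icc.mpr hj.1
  have htS : t * (∑ i ∈ Finset.Icc 1 jstar, (τ i)⁻¹) = 2 * ((R : ℝ) + jstar) := by
    have hS0 : (∑ i ∈ Finset.Icc 1 jstar, (τ i)⁻¹) ≠ 0 := hSpos.ne'
    rw [hteq]
    have : 2 * (∑ i ∈ Finset.Icc 1 jstar, (τ i)⁻¹)⁻¹ * ((R : ℝ) + jstar)
        * (∑ i ∈ Finset.Icc 1 jstar, (τ i)⁻¹)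
        = 2 * ((R : ℝ) + jstar) * ((∑ i ∈ Finset.Icc 1 jstar, (τ i)⁻¹)⁻¹
          * (∑ i ∈ Finset.Icc 1 jstar, (τ i)⁻¹)) := by ring
    rw [this, inv_mul_cancel₀ hS0, mul_one]
  have h1 : ∑ i ∈ Finset.Icc 1 jstar, max (⌊t / τ i⌋ - 1) 0
      ≤ ∑ i ∈ Finset.Icc 1 n, max (⌊t / τ i⌋ - 1) 0 :=
    Finset.sum_le_sum_of_subset_of_nonneg hsub (fun i _ _ => le_max_right _ _)
  have key : ∀ i ∈ Finset.Icc 1 jstar,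
      t / τ i - 2 ≤ ((max (⌊t / τ i⌋ - 1) 0 : ℤ) : ℝ) := by
    intro i hi
    push_cast
    have h := Int.sub_one_lt_floor (t / τ i)
    have h2 := le_max_left ((⌊t / τ i⌋ : ℝ) - 1) 0
    linarith
  have hsum : ∑ i ∈ Finset.Icc 1 jstar, (t / τ i - 2)
      ≤ ∑ i ∈ Finset.Icc 1 jstar, ((max (⌊t / τ i⌋ - 1) 0 : ℤ) : ℝ) :=
    Finset.sum_le_sum key
  have hcomp : ∑ i ∈ Finset.Icc 1 jstar, (t / τ i - 2) = 2 * (R : ℝ) := by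
    rw [Finset.sum_sub_distrib, Finset.sum_const, Nat.card_Icc]
    have : ∑ i ∈ Finset.Icc 1 jstar, t / τ i
        = t * (∑ i ∈ Finset.Icc 1 jstar, (τ i)⁻¹) := by
      rw [Finset.mul_sum]; exact Finset.sum_congr rfl fun i _ => div_eq_mul_inv t (τ i)
    rw [this, htS]
    simp [nsmul_eq_mul]
    ring
  have h2 : (R : ℝ) ≤ ∑ i ∈ Finset.Icc 1 jstar, ((max (⌊t / τ i⌋ - 1) 0 : ℤ) : ℝ) := by
    have hR' : (1 : ℝ) ≤ R := by exact_mod_cast hR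
    linarith [hsum, hcomp.symm ▸ hsum]
  have h2' : (R : ℤ) ≤ ∑ i ∈ Finset.Icc 1 jstar, max (⌊t / τ i⌋ - 1) 0 := by
    have hc : ((∑ i ∈ Finset.Icc 1 jstar, max (⌊t / τ i⌋ - 1) 0 : ℤ) : ℝ)
        = ∑ i ∈ Finset.Icc 1 jstar, ((max (⌊t / τ i⌋ - 1) 0 : ℤ) : ℝ) := by push_cast; rfl
    exact_mod_cast h2.trans_eq hc.symm
  exact h2'.trans h1
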